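/- Let A and B be C*-algebras, let π : A → B be a *-homomorphism and let σ : A → B be an anti-*-homomorphism whose ranges are orthogonal, i.e., π(x)σ(y) = 0 and σ(y)π(x) = 0 for all x, y ∈ A, and set J = π + σ (so J is a Jordan *-homomorphism). If J is completely bounded with constant C ≥ 0, i.e., for every k ≥ 1 and every k×k matrix a = (a_{ij}) over A one has ‖(J(a_{ij}))_{ij}‖ ≤ C‖a‖, then σ is completely bounded with the same constant C: for every k ≥ 1 and every k×k matrix a = (a_{ij}) over A, ‖(σ(a_{ij}))_{ij}‖ ≤ C‖a‖. -/

import Mathlib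

open scoped Matrix

/-- The operator on the Hilbert space `ℓ²(Fin k; H)` induced by a `k × k` matrix of bounded
operators on a Hilbert space `H`. -/
noncomputable def Matrix.toPiLpCLM {H : Type*} [NormedAddCommGroup H] [InnerProductSpace ℂ H]
    {k : ℕ} (a : Matrix (Fin k) (Fin k) (H →L[ℂ] H)) :
    (PiLp 2 fun _ : Fin k => H) →L[ℂ] (PiLp 2 fun _ : Fin k => H) :=
  ((PiLp.continuousLinearEquiv 2 ℂ (fun _ : Fin k => H)).symm.toContinuousLinearMap) ∘L
    (ContinuousLinearMap.pi fun i => ∑ j, (a i j) ∘L ContinuousLinearMap.proj j) ∘L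
    ((PiLp.continuousLinearEquiv 2 ℂ (fun _ : Fin k => H)).toContinuousLinearMap)

/-- The (unique) C*-norm of a `k × k` matrix of bounded operators on a Hilbert space `H`:
the operator norm of the induced operator on the Hilbert space `ℓ²(Fin k; H)`.  For a matrix
over an abstract C*-algebra, the C*-norm is obtained by applying a faithful representation
entrywise and then taking this norm. -/
noncomputable def Matrix.cstarNorm {H : Type*} [NormedAddCommGroup H] [InnerProductSpace ℂ H]
    {k : ℕ} (a : Matrix (Fin k) (Fin k) (H →L[ℂ] H)) : ℝ :=
  ‖a.toPiLpCLM‖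

lemma Matrix.toPiLpCLM_apply {H : Type*} [NormedAddCommGroup H] [InnerProductSpace ℂ H]
    {k : ℕ} (a : Matrix (Fin k) (Fin k) (H →L[ℂ] H)) (v : PiLp 2 fun _ : Fin k => H)
    (i : Fin k) : a.toPiLpCLM v i = ∑ j, a i j (v j) := by
  simp [Matrix.toPiLpCLM, ContinuousLinearMap.sum_apply]

set_option synthInstance.maxHeartbeats 1000000 in
/-- If `J = π + σ` is a Jordan *-homomorphism with `π` a *-homomorphism and `σ` an
anti-*-homomorphism whose ranges are orthogonal, and `J` is completely bounded with constant
`C ≥ 0`, then `σ` is completely bounded with the same constant `C`.  Matrix C*-norms are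
computed via the given faithful representations `ρA` and `ρB`. -/
theorem anti_part_cb_of_jordan_star_hom_cb
    {A B HA HB : Type*} [CStarAlgebra A] [CStarAlgebra B]
    [NormedAddCommGroup HA] [InnerProductSpace ℂ HA] [CompleteSpace HA]
    [NormedAddCommGroup HB] [InnerProductSpace ℂ HB] [CompleteSpace HB]
    (ρA : A →⋆ₐ[ℂ] (HA →L[ℂ] HA)) (hρA : Function.Injective ρA)
    (ρB : B →⋆ₐ[ℂ] (HB →L[ℂ] HB)) (hρB : Function.Injective ρB)
    (π σ : A →ₗ[ℂ] B)
    (hπmul : ∀ x y : A, π (x * y) = π x * π y)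
    (hπstar : ∀ x : A, π (star x) = star (π x))
    (hσmul : ∀ x y : A, σ (x * y) = σ y * σ x)
    (hσstar : ∀ x : A, σ (star x) = star (σ x))
    (horth : ∀ x y : A, π x * σ y = 0 ∧ σ y * π x = 0)
    (C : ℝ) (hC : 0 ≤ C)
    (hcb : ∀ k : ℕ, 1 ≤ k → ∀ a : Matrix (Fin k) (Fin k) A,
      Matrix.cstarNorm ((a.map fun x => π x + σ x).map ⇑ρB) ≤
        C * Matrix.cstarNorm (a.map ⇑ρA)) :
    ∀ k : ℕ, 1 ≤ k → ∀ a : Matrix (Fin k) (Fin k) A,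
      Matrix.cstarNorm ((a.map ⇑σ).map ⇑ρB) ≤ C * Matrix.cstarNorm (a.map ⇑ρA) := by
  intro k hk a
  set p : Matrix (Fin k) (Fin k) (HB →L[ℂ] HB) := (a.map ⇑π).map ⇑ρB with hp
  set c : Matrix (Fin k) (Fin k) (HB →L[ℂ] HB) := (a.map ⇑σ).map ⇑ρB with hc
  have hm : (a.map fun x => π x + σ x).map ⇑ρB = p + c := by
    ext i j
    simp [hp, hc, Matrix.map_apply, Matrix.add_apply]
  have hadd : (p + c).toPiLpCLM = p.toPiLpCLM + c.toPiLpCLM := by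
    refine ContinuousLinearMap.ext fun v => ?_
    refine PiLp.ext fun i => ?_
    simp [Matrix.toPiLpCLM_apply, Matrix.add_apply, Finset.sum_add_distrib]
  have hzero : ∀ i j i' l, star (p i j) * c i' l = 0 := by
    intro i j i' l
    simp only [hp, hc, Matrix.map_apply]
    rw [← map_star, ← map_mul, ← hπstar, (horth _ _).1, map_zero]
  have hcross : ∀ v : PiLp 2 fun _ : Fin k => HB,
      (inner ℂ (p.toPiLpCLM v) (c.toPiLpCLM v) : ℂ) = 0 := by
    intro v
    rw [PiLp.inner_apply]
    refine Finset.sum_eq_zero fun i _ => ?_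
    rw [Matrix.toPiLpCLM_apply, Matrix.toPiLpCLM_apply, sum_inner]
    refine Finset.sum_eq_zero fun j _ => ?_
    rw [inner_sum]
    refine Finset.sum_eq_zero fun l _ => ?_
    rw [← ContinuousLinearMap.adjoint_inner_right, ← ContinuousLinearMap.star_eq_adjoint,
      ← ContinuousLinearMap.mul_apply, hzero]
    simp
  have hle : ‖c.toPiLpCLM‖ ≤ ‖(p + c).toPiLpCLM‖ := by
    refine ContinuousLinearMap.opNorm_le_bound _ (norm_nonneg (p + c).toPiLpCLM) fun v => ?_
    have h2 : ‖(p + c).toPiLpCLM v‖ ^ 2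
        = ‖p.toPiLpCLM v‖ ^ 2 + ‖c.toPiLpCLM v‖ ^ 2 := by
      rw [hadd, ContinuousLinearMap.add_apply, norm_add_sq (𝕜 := ℂ), hcross v]
      simp
    have h1 : ‖c.toPiLpCLM v‖ ≤ ‖(p + c).toPiLpCLM v‖ := by
      have := sq_nonneg ‖p.toPiLpCLM v‖
      nlinarith [norm_nonneg (c.toPiLpCLM v), norm_nonneg ((p + c).toPiLpCLM v)]
    exact h1.trans (ContinuousLinearMap.le_opNorm _ v)
  calc Matrix.cstarNorm c ≤ Matrix.cstarNorm (p + c) := hle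
    _ = Matrix.cstarNorm ((a.map fun x => π x + σ x).map ⇑ρB) := by rw [hm]
    _ ≤ C * Matrix.cstarNorm (a.map ⇑ρA) := hcb k hk a
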